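/- Let n ≥ 1 and let p ∈ ℝ^n ⊆ ℂ^n with ‖p‖ = 1. (a) For every a ∈ [0, 1] and every ε ∈ {1, −1}, the point z·p ∈ ℂ^n with z = a + 2εi·a·√(1 − a²) lies in the image W(S^n_1) of the Whitney sphere of radius 1; explicitly z·p = W(y) for y = (ε√(1 − a²), a·p_1, …, a·p_n) ∈ S^n_1. (b) The two-dimensional Lebesgue measure of the teardrop domain D_α = {z ∈ ℂ : 0 ≤ Re z ≤ 1 and |Im z| ≤ 2·Re z·√(1 − (Re z)²)} equals 4/3. (The linear holomorphic map z ↦ z·p is a teardrop with boundary on the Whitney sphere, of area 4/3.) -/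

import Mathlib

open scoped BigOperators

/-- The Whitney sphere parameterization `W : ℝ^{n+1} → ℂ^n`,
`W(x)_j = x_j + 2i·x_0·x_j` for `1 ≤ j ≤ n`. -/
noncomputable def whitney (n : ℕ) (x : EuclideanSpace ℝ (Fin (n + 1))) : Fin n → ℂ :=
  fun j => (x j.succ : ℂ) + 2 * Complex.I * (x 0 : ℂ) * (x j.succ : ℂ)

/-- The linear holomorphic map `z ↦ z·p` is a teardrop with boundary on the radius-1 Whitney
sphere, of area `4/3`: (a) for `a ∈ [0,1]`, `ε = ±1`, the boundary point `z·p` with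
`z = a + 2εi·a·√(1−a²)` equals `W(y)` for `y = (ε√(1−a²), a·p₁, …, a·pₙ) ∈ S^n_1`; (b) the
teardrop domain has Lebesgue measure `4/3`. -/
theorem stmt16 (n : ℕ) (hn : 1 ≤ n)
    (p : EuclideanSpace ℝ (Fin n)) (hp : ‖p‖ = 1) :
    (∀ a ∈ Set.Icc (0 : ℝ) 1, ∀ ε : ℝ, (ε = 1 ∨ ε = -1) →
      ∀ y : EuclideanSpace ℝ (Fin (n + 1)),
        (∀ i : Fin (n + 1),
          y i = Fin.cases (ε * Real.sqrt (1 - a ^ 2)) (fun j => a * p j) i) →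
        ‖y‖ = 1 ∧
          whitney n y = fun j =>
            ((a : ℂ) + 2 * (ε : ℂ) * Complex.I * (a : ℂ) * (Real.sqrt (1 - a ^ 2) : ℂ)) *
              (p j : ℂ)) ∧
    MeasureTheory.volume
      {z : ℂ | 0 ≤ z.re ∧ z.re ≤ 1 ∧ |z.im| ≤ 2 * z.re * Real.sqrt (1 - z.re ^ 2)} =
      ENNReal.ofReal (4 / 3) := by
  constructor
  · rintro a ⟨ha0, ha1⟩ ε hε y hy
    have hy0 : y 0 = ε * Real.sqrt (1 - a ^ 2) := by simpa using hy 0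
    have hys : ∀ j : Fin n, y j.succ = a * p j := fun j => by simpa using hy j.succ
    have h1a : (0:ℝ) ≤ 1 - a ^ 2 := by nlinarith
    have hε2 : ε ^ 2 = 1 := by rcases hε with h | h <;> simp [h]
    constructor
    · have hsum : ∑ i, ‖y i‖ ^ 2 = 1 := by
        rw [Fin.sum_univ_succ]
        have hps : ∑ j, ‖p j‖ ^ 2 = 1 := by
          have := EuclideanSpace.norm_eq p
          rw [hp] at this
          have h2 : Real.sqrt (∑ j, ‖p j‖ ^ 2) = 1 := this.symm
          have hnn : (0:ℝ) ≤ ∑ j, ‖p j‖ ^ 2 :=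
            Finset.sum_nonneg fun j _ => sq_nonneg ‖p j‖
          nlinarith [Real.sq_sqrt hnn, h2]
        simp only [hy0, hys, Real.norm_eq_abs, sq_abs]
        have : ∑ j : Fin n, (a * p j) ^ 2 = a ^ 2 * ∑ j, ‖p j‖ ^ 2 := by
          rw [Finset.mul_sum]; congr 1; ext j; rw [Real.norm_eq_abs, sq_abs]; ring
        rw [this, hps, mul_pow, hε2, Real.sq_sqrt h1a]
        ring
      rw [EuclideanSpace.norm_eq]
      simp only [Real.norm_eq_abs, sq_abs] at hsum ⊢
      rw [hsum, Real.sqrt_one]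
    · funext j
      simp only [whitney, hy0, hys]
      push_cast
      ring
  · set f : ℝ → ℝ := fun x => 2 * x * Real.sqrt (1 - x ^ 2) with hf
    have hfc : Continuous f := by
      apply Continuous.mul (by continuity)
      exact Real.continuous_sqrt.comp (by continuity)
    set S : Set (ℝ × ℝ) := {q | 0 ≤ q.1 ∧ q.1 ≤ 1 ∧ |q.2| ≤ f q.1} with hSdef
    have hS : MeasurableSet S := by
      have : IsClosed S := by
        apply IsClosed.inter (isClosed_le continuous_const continuous_fst)
        apply IsClosed.inter (isClosed_le continuous_fst continuous_const)
        exact isClosed_le (continuous_snd.abs) (hfc.comp continuous_fst)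
      exact this.measurableSet
    have hpre : {z : ℂ | 0 ≤ z.re ∧ z.re ≤ 1 ∧ |z.im| ≤ 2 * z.re * Real.sqrt (1 - z.re ^ 2)}
        = Complex.measurableEquivRealProd ⁻¹' S := by
      ext z
      simp [S, Complex.measurableEquivRealProd, Complex.equivRealProd, f]
    rw [hpre, MeasureTheory.MeasurePreserving.measure_preimage
      Complex.volume_preserving_equiv_real_prod hS.nullMeasurableSet]
    rw [MeasureTheory.Measure.volume_eq_prod, MeasureTheory.Measure.prod_apply hS]
    have hslice : ∀ x : ℝ, MeasureTheory.volume (Prod.mk x ⁻¹' S) =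
        Set.indicator (Set.Icc (0:ℝ) 1)
          (fun x => ENNReal.ofReal (4 * x * Real.sqrt (1 - x ^ 2))) x := by
      intro x
      by_cases hx : x ∈ Set.Icc (0:ℝ) 1
      · have hfx : 0 ≤ f x := by
          apply mul_nonneg (by nlinarith [hx.1]) (Real.sqrt_nonneg _)
        have : Prod.mk x ⁻¹' S = Set.Icc (-(f x)) (f x) := by
          ext y
          simp only [S, Set.mem_preimage, Set.mem_setOf_eq, Set.mem_Icc, abs_le]
          constructor
          · rintro ⟨_, _, h1, h2⟩; exact ⟨h1, h2⟩
          · rintro ⟨h1, h2⟩; exact ⟨hx.1, hx.2, h1, h2⟩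
        rw [this, Real.volume_Icc, Set.indicator_of_mem hx]
        congr 1
        simp [f]; ring
      · have : Prod.mk x ⁻¹' S = ∅ := by
          ext y
          simp only [S, Set.mem_preimage, Set.mem_setOf_eq, Set.mem_empty_iff_false, iff_false]
          rintro ⟨h1, h2, -⟩
          exact hx ⟨h1, h2⟩
        rw [this, Set.indicator_of_notMem hx]
        simp
    simp_rw [hslice]
    rw [MeasureTheory.lintegral_indicator measurableSet_Icc]
    have hg : Continuous (fun x : ℝ => 4 * x * Real.sqrt (1 - x ^ 2)) := by
      apply Continuous.mul (by continuity)
      exact Real.continuous_sqrt.comp (by continuity)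
    have hint : MeasureTheory.IntegrableOn (fun x : ℝ => 4 * x * Real.sqrt (1 - x ^ 2))
        (Set.Icc (0:ℝ) 1) := hg.integrableOn_Icc
    have hnn : 0 ≤ᵐ[MeasureTheory.volume.restrict (Set.Icc (0:ℝ) 1)]
        (fun x : ℝ => 4 * x * Real.sqrt (1 - x ^ 2)) := by
      refine MeasureTheory.ae_restrict_of_forall_mem measurableSet_Icc ?_
      intro x hx
      exact mul_nonneg (by nlinarith [hx.1]) (Real.sqrt_nonneg _)
    rw [← MeasureTheory.ofReal_integral_eq_lintegral_ofReal hint hnn]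
    congr 1
    rw [MeasureTheory.integral_Icc_eq_integral_Ioc,
      ← intervalIntegral.integral_of_le (by norm_num : (0:ℝ) ≤ 1)]
    have key : ∀ x ∈ Set.uIcc (0:ℝ) 1,
        HasDerivAt (fun t : ℝ => -(4/3) * (1 - t ^ 2) ^ (3/2 : ℝ))
          (4 * x * Real.sqrt (1 - x ^ 2)) x := by
      intro x hx
      have h1 : HasDerivAt (fun t : ℝ => 1 - t ^ 2) (-(2 * x)) x := by
        simpa using (hasDerivAt_pow 2 x).const_sub 1
      have h2 := (h1.rpow_const (p := 3/2) (Or.inr (by norm_num))).const_mul (-(4/3) : ℝ)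
      convert h2 using 1
      · rfl
      · rfl
      rw [Set.uIcc_of_le (by norm_num : (0:ℝ) ≤ 1)] at hx
      have h1x : (0:ℝ) ≤ 1 - x ^ 2 := by nlinarith [hx.1, hx.2]
      rw [Real.sqrt_eq_rpow]
      norm_num
      ring
    rw [intervalIntegral.integral_eq_sub_of_hasDerivAt key
      (Continuous.intervalIntegrable hg _ _)]
    norm_num
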